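/- Let c > 0 be a real number and let {X_n}_{n≥0} be a martingale (with respect to some filtration) satisfying |X_{m+1} - X_m| ≤ c almost surely for every m ≥ 0. Then for all non-negative integers x, y, m, the probability P(X_m - X_0 ≥ x·c or X_m - X_0 ≤ -y·c) is at most 2·I_b(⌊(m-x)/2⌋, 2⌊(m-x)/2⌋ + x + 2) + 2·I_b(⌊(m-y)/2⌋, 2⌊(m-y)/2⌋ + y + 2). -/

import Mathlib

open MeasureTheory Filter

/-- `Ib n m = Σ_{z=0}^{n} ((1 + (-1)^{n-z}) / 2^m) · m!/(z!(m-z)!)`, empty sum for `n < 0`. -/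
noncomputable def Ib (n : ℤ) (m : ℕ) : ℝ :=
  ∑ z ∈ Finset.range (n + 1).toNat,
    ((1 + (-1 : ℝ) ^ (n.toNat - z)) / 2 ^ m) * (m.choose z)

/-- The function `G(x, y, m)` of the paper. -/
noncomputable def Gfun (x y m : ℕ) : ℝ :=
  if x = 0 ∧ y = 0 then 1 else
    ∑ n ∈ Finset.range (m / (2 * (x + y)) + 1),
      (2 * Ib (((m : ℤ) - x) / 2 - ((x : ℤ) + y) * n) (2 * (((m : ℤ) - x) / 2) + x + 2).toNat
       - 2 * Ib (((m : ℤ) - x) / 2 - y - ((x : ℤ) + y) * n) (2 * (((m : ℤ) - x) / 2) + x + 2).toNat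
       + 2 * Ib (((m : ℤ) - y) / 2 - ((x : ℤ) + y) * n) (2 * (((m : ℤ) - y) / 2) + y + 2).toNat
       - 2 * Ib (((m : ℤ) - y) / 2 - x - ((x : ℤ) + y) * n) (2 * (((m : ℤ) - y) / 2) + y + 2).toNat)

/-- The piecewise-linear interpolation `H_{n,m}(t)` of the paper. -/
noncomputable def Hfun (n m : ℕ) (t : ℝ) : ℝ :=
  if (n : ℝ) ≤ |t| then 1 else
    (1 - ((n : ℝ) + t) / 2 + (⌊((n : ℝ) + t) / 2⌋ : ℤ))
        * Gfun (⌊((n : ℝ) + t) / 2⌋).toNat (n - (⌊((n : ℝ) + t) / 2⌋).toNat) m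
    + (((n : ℝ) + t) / 2 - (⌊((n : ℝ) + t) / 2⌋ : ℤ))
        * Gfun ((⌊((n : ℝ) + t) / 2⌋).toNat + 1) (n - (⌊((n : ℝ) + t) / 2⌋).toNat - 1) m



/-- prefix sums of binomial coefficients -/
def Sb (M t : ℕ) : ℕ := ∑ z ∈ Finset.range t, M.choose z

/-- parity-restricted prefix sums -/
def Pb (M n : ℕ) : ℕ := ∑ z ∈ Finset.range (n+1), if (n - z) % 2 = 0 then M.choose z else 0

lemma Sb_succ_left (M t : ℕ) : Sb (M+1) (t+1) = Sb M (t+1) + Sb M t := by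
  induction t with
  | zero => simp [Sb]
  | succ t ih =>
    have e1 : Sb (M+1) (t+1+1) = Sb (M+1) (t+1) + (M+1).choose (t+1) := by
      rw [Sb, Sb, Finset.sum_range_succ]
    have e2 : Sb M (t+1+1) = Sb M (t+1) + M.choose (t+1) := by
      rw [Sb, Sb, Finset.sum_range_succ]
    have e3 : Sb M (t+1) = Sb M t + M.choose t := by
      rw [Sb, Sb, Finset.sum_range_succ]
    have e4 : (M+1).choose (t+1) = M.choose t + M.choose (t+1) := Nat.choose_succ_succ M t
    omega

lemma Pb_add (M n : ℕ) : Pb M (n+1) + Pb M n = Sb M (n+2) := by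
  have key : ∑ z ∈ Finset.range (n+1),
      ((if (n + 1 - z) % 2 = 0 then M.choose z else 0) + if (n - z) % 2 = 0 then M.choose z else 0)
        = Sb M (n+1) := by
    rw [Sb]
    apply Finset.sum_congr rfl
    intro z hz
    have hz' : z ≤ n := by simpa [Nat.lt_succ_iff] using hz
    rcases Nat.even_or_odd (n - z) with h | h
    · have h2 : (n - z) % 2 = 0 := Nat.even_iff.mp h
      have h3 : ¬ ((n + 1 - z) % 2 = 0) := by omega
      simp [h2, h3]
    · have h2 : ¬ ((n - z) % 2 = 0) := by
        simpa [Nat.odd_iff] using h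
      have h3 : (n + 1 - z) % 2 = 0 := by omega
      simp [h2, h3]
  have e1 : Pb M (n+1) = (∑ z ∈ Finset.range (n+1),
      if (n + 1 - z) % 2 = 0 then M.choose z else 0) + M.choose (n+1) := by
    rw [Pb, Finset.sum_range_succ]
    simp
  have e2 : Sb M (n+2) = Sb M (n+1) + M.choose (n+1) := by
    rw [Sb, Sb, Finset.sum_range_succ]
  rw [Finset.sum_add_distrib] at key
  rw [e1, Pb, e2, ← key]
  ring

lemma evenId (m n : ℕ) : Pb (m+2) n = Sb m (n+1) + Sb m n := by
  induction n with
  | zero => simp [Pb, Sb]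
  | succ n ih =>
    have h1 := Pb_add (m+2) n
    have a1 := Sb_succ_left (m+1) (n+1)
    have a2 := Sb_succ_left m (n+1)
    have a3 := Sb_succ_left m n
    simp only [show n+1+1 = n+2 from rfl, show m+1+1 = m+2 from rfl] at a1 a2 a3 ih h1 ⊢
    omega

lemma oddId (m n : ℕ) : Pb (m+1) n = Sb m (n+1) := by
  induction n with
  | zero => simp [Pb, Sb]
  | succ n ih =>
    have h1 := Pb_add (m+1) n
    have h2 := Sb_succ_left m (n+1)
    simp only [show n+1+1 = n+2 from rfl] at h1 h2 ih ⊢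
    omega

/-- numerator of the binomial tail `2^m P(S_m ≥ k)` -/
def Nnum (m k : ℕ) : ℕ :=
  ∑ z ∈ Finset.range (m+1), if 2*z + k ≤ m then m.choose z else 0

/-- hitting probability of level `k` for the simple walk within `j` steps -/
noncomputable def vfun : ℕ → ℤ → ℝ
  | 0, k => if k ≤ 0 then 1 else 0
  | (j+1), k => if k ≤ 0 then 1 else (vfun j (k-1) + vfun j (k+1))/2

lemma Nnum_rec (m k : ℕ) : Nnum (m+1) (k+1) = Nnum m k + Nnum m (k+2) := by
  have e1 : Nnum (m+1) (k+1)
      = (∑ z ∈ Finset.range (m+1), if 2*(z+1) + (k+1) ≤ m+1 then (m+1).choose (z+1) else 0)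
        + (if 2*0 + (k+1) ≤ m+1 then (m+1).choose 0 else 0) := by
    rw [Nnum, Finset.sum_range_succ']
  have e2 : ∀ z ∈ Finset.range (m+1),
      (if 2*(z+1) + (k+1) ≤ m+1 then (m+1).choose (z+1) else 0)
        = (if 2*z + (k+2) ≤ m then m.choose z else 0)
          + (if 2*z + (k+2) ≤ m then m.choose (z+1) else 0) := by
    intro z _
    have hiff : (2*(z+1) + (k+1) ≤ m+1) ↔ (2*z + (k+2) ≤ m) := by omega
    rw [if_congr hiff rfl rfl, Nat.choose_succ_succ]
    split <;> simp
  have e3 : Nnum m k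
      = (∑ z ∈ Finset.range m, if 2*(z+1) + k ≤ m then m.choose (z+1) else 0)
        + (if 2*0 + k ≤ m then m.choose 0 else 0) := by
    rw [Nnum, Finset.sum_range_succ']
  have e4 : (∑ z ∈ Finset.range (m+1), if 2*z + (k+2) ≤ m then m.choose (z+1) else 0)
      = ∑ z ∈ Finset.range m, if 2*(z+1) + k ≤ m then m.choose (z+1) else 0 := by
    rw [Finset.sum_range_succ]
    have hz : (if 2*m + (k+2) ≤ m then m.choose (m+1) else 0) = 0 := by
      have : ¬ (2*m + (k+2) ≤ m) := by omega
      simp [this]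
    rw [hz, add_zero]
    apply Finset.sum_congr rfl
    intro z _
    have hiff : (2*z + (k+2) ≤ m) ↔ (2*(z+1) + k ≤ m) := by omega
    rw [if_congr hiff rfl rfl]
  rw [e1, Finset.sum_congr rfl e2, Finset.sum_add_distrib, e4, e3, Nnum]
  have hiff2 : (2*0 + (k+1) ≤ m+1) ↔ (2*0 + k ≤ m) := by omega
  rw [if_congr hiff2 rfl rfl]
  simp [Nat.choose_zero_right]
  ring

lemma Nnum_symm (m : ℕ) : Nnum m 0 + Nnum m 1 = 2^m := by
  have e1 : Nnum m 0 = ∑ z ∈ Finset.range (m+1), if m ≤ 2*z then m.choose z else 0 := by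
    rw [Nnum, ← Finset.sum_range_reflect]
    apply Finset.sum_congr rfl
    intro z hz
    have hz' : z ≤ m := by
      have := Finset.mem_range.mp hz; omega
    have hiff : (2*(m - z) + 0 ≤ m) ↔ (m ≤ 2*z) := by omega
    simp only [Nat.add_sub_cancel]
    rw [if_congr hiff rfl rfl, Nat.choose_symm hz']
  have e2 : ∀ z ∈ Finset.range (m+1),
      ((if m ≤ 2*z then m.choose z else 0) + if 2*z + 1 ≤ m then m.choose z else 0)
        = m.choose z := by
    intro z _
    rcases le_or_gt m (2*z) with h | h
    · have h2 : ¬ (2*z + 1 ≤ m) := by omega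
      simp [h, h2]
    · have h2 : ¬ (m ≤ 2*z) := by omega
      have h3 : 2*z + 1 ≤ m := by omega
      simp [h2, h3]
  have := Nat.sum_range_choose m
  calc Nnum m 0 + Nnum m 1
      = ∑ z ∈ Finset.range (m+1),
          ((if m ≤ 2*z then m.choose z else 0) + if 2*z + 1 ≤ m then m.choose z else 0) := by
        rw [Finset.sum_add_distrib, ← e1]; rfl
    _ = ∑ z ∈ Finset.range (m+1), m.choose z := Finset.sum_congr rfl e2
    _ = 2^m := Nat.sum_range_choose m

lemma vfun_nonpos (j : ℕ) {k : ℤ} (hk : k ≤ 0) : vfun j k = 1 := by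
  cases j <;> simp [vfun, hk]

lemma vfun_big {j : ℕ} {k : ℤ} (hk : (j : ℤ) < k) : vfun j k = 0 := by
  induction j generalizing k with
  | zero =>
    have : ¬ (k ≤ 0) := by omega
    simp [vfun, this]
  | succ j ih =>
    have h1 : ¬ (k ≤ 0) := by omega
    rw [vfun, if_neg h1, ih (by omega), ih (by omega)]
    norm_num

lemma vfun_eq_w (m k : ℕ) : vfun m (k : ℤ) = ((Nnum m k : ℝ) + (Nnum m (k+1) : ℝ)) / 2^m := by
  induction m generalizing k with
  | zero =>
    rcases Nat.eq_zero_or_pos k with h | h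
    · subst h; simp [vfun, Nnum]
    · have h1 : ¬ ((k:ℤ) ≤ 0) := by omega
      have h2 : Nnum 0 k = 0 := by
        simp [Nnum]; omega
      have h3 : Nnum 0 (k+1) = 0 := by
        simp [Nnum]
      simp [vfun, h1, h2, h3]
      omega
  | succ m ih =>
    rcases Nat.eq_zero_or_pos k with h | h
    · subst h
      have h2 := Nnum_symm (m+1)
      have h1 : vfun (m+1) ((0:ℕ):ℤ) = 1 := by
        rw [Nat.cast_zero]; exact vfun_nonpos _ le_rfl
      rw [h1]
      have e : ((Nnum (m+1) 0 : ℝ) + (Nnum (m+1) (0+1) : ℝ)) = 2^(m+1) := by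
        exact_mod_cast h2
      rw [e, div_self (by positivity)]
    · obtain ⟨k', rfl⟩ : ∃ k', k = k' + 1 := ⟨k - 1, by omega⟩
      have h1 : ¬ (((k'+1:ℕ):ℤ) ≤ 0) := by push_cast; omega
      have e0 : vfun (m+1) ((k'+1:ℕ):ℤ)
          = (vfun m (k':ℤ) + vfun m ((k'+2:ℕ):ℤ))/2 := by
        rw [vfun, if_neg h1,
          show ((k'+1:ℕ):ℤ) - 1 = (k':ℤ) by push_cast; ring,
          show ((k'+1:ℕ):ℤ) + 1 = ((k'+2:ℕ):ℤ) by push_cast; ring]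
      rw [e0, ih k', ih (k'+2), Nnum_rec m k', Nnum_rec m (k'+1)]
      have : (k'+1)+1 = k'+2 := rfl
      rw [this]
      push_cast
      have h2 : (2:ℝ)^(m+1) = 2 * 2^m := by ring
      rw [h2]
      have h3 : (2:ℝ)^m ≠ 0 := by positivity
      field_simp
      all_goals ring

lemma Ib_eval (n M : ℕ) : Ib (n : ℤ) M = 2 * (Pb M n : ℝ) / 2^M := by
  rw [Ib]
  have h1 : (((n:ℤ) + 1).toNat) = n + 1 := by omega
  have h2 : ((n:ℤ)).toNat = n := by omega
  rw [h1, h2]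
  have h3 : ∀ z ∈ Finset.range (n+1),
      ((1 + (-1 : ℝ) ^ (n - z)) / 2 ^ M) * (M.choose z)
        = (2 / 2^M) * (if (n - z) % 2 = 0 then (M.choose z : ℝ) else 0) := by
    intro z _
    rcases Nat.even_or_odd (n - z) with h | h
    · rw [h.neg_one_pow, if_pos (Nat.even_iff.mp h)]
      ring
    · rw [h.neg_one_pow, if_neg (by simpa [Nat.odd_iff] using h)]
      ring
  rw [Finset.sum_congr rfl h3, ← Finset.mul_sum]
  have h4 : (Pb M n : ℝ) = ∑ z ∈ Finset.range (n+1), (if (n - z) % 2 = 0 then (M.choose z : ℝ) else 0) := by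
    rw [Pb]
    push_cast
    rfl
  rw [← h4]
  ring

lemma Nnum_eq_Sb (m k t : ℕ) (h : ∀ z, 2*z + k ≤ m ↔ z < t) (ht : t ≤ m+1) :
    Nnum m k = Sb m t := by
  rw [Nnum, Sb]
  rw [← Finset.sum_subset (Finset.range_subset_range.mpr ht)
    (fun z _ hz => by
      have : ¬ (2*z + k ≤ m) := by
        rw [h z]; simpa using hz
      simp [this])]
  apply Finset.sum_congr rfl
  intro z hz
  rw [if_pos ((h z).mpr (Finset.mem_range.mp hz))]

theorem vfun_eq_Ib (m x : ℕ) :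
    vfun m (x : ℤ) = 2 * Ib (((m : ℤ) - x) / 2) ((2 * (((m : ℤ) - x) / 2) + x + 2).toNat) := by
  rcases le_or_gt x m with hxm | hxm
  · -- x ≤ m
    rcases Nat.even_or_odd (m - x) with ⟨nb, hnb⟩ | ⟨nb, hnb⟩
    · -- even : m = x + 2 nb
      have hm : m = x + 2*nb := by omega
      have hq : ((m : ℤ) - x) / 2 = (nb : ℤ) := by
        subst hm; push_cast; omega
      rw [hq, show ((2 * (nb:ℤ) + x + 2).toNat) = m + 2 by omega, Ib_eval nb (m+2), vfun_eq_w]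
      have e1 : Nnum m x = Sb m (nb+1) := Nnum_eq_Sb m x (nb+1) (fun z => by omega) (by omega)
      have e2 : Nnum m (x+1) = Sb m nb := Nnum_eq_Sb m (x+1) nb (fun z => by omega) (by omega)
      rw [e1, e2]
      have e3 := evenId m nb
      rw [show ((Sb m (nb+1) :ℝ) + (Sb m nb :ℝ)) = (Pb (m+2) nb : ℝ) by exact_mod_cast e3.symm]
      rw [show (2:ℝ)^(m+2) = 4 * 2^m by ring]
      have h2 : (2:ℝ)^m ≠ 0 := by positivity
      field_simp
      ring
    · -- odd : m = x + 2 nb + 1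
      have hm : m = x + 2*nb + 1 := by omega
      have hq : ((m : ℤ) - x) / 2 = (nb : ℤ) := by
        subst hm; push_cast; omega
      rw [hq, show ((2 * (nb:ℤ) + x + 2).toNat) = m + 1 by omega, Ib_eval nb (m+1), vfun_eq_w]
      have e1 : Nnum m x = Sb m (nb+1) := Nnum_eq_Sb m x (nb+1) (fun z => by omega) (by omega)
      have e2 : Nnum m (x+1) = Sb m (nb+1) := Nnum_eq_Sb m (x+1) (nb+1) (fun z => by omega) (by omega)
      rw [e1, e2]
      have e3 := oddId m nb
      rw [show ((Pb (m+1) nb : ℝ)) = (Sb m (nb+1) : ℝ) by exact_mod_cast e3]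
      rw [show (2:ℝ)^(m+1) = 2 * 2^m by ring]
      have h2 : (2:ℝ)^m ≠ 0 := by positivity
      field_simp
      ring
  · -- x > m : both sides zero
    have h1 : vfun m (x:ℤ) = 0 := vfun_big (by exact_mod_cast hxm)
    have h2 : ((((m : ℤ) - x) / 2) + 1).toNat = 0 := by omega
    rw [h1, Ib, h2]
    simp



lemma vfun_pos_rec (j : ℕ) {k : ℤ} (hk : 1 ≤ k) :
    vfun (j+1) k = (vfun j (k-1) + vfun j (k+1))/2 := by
  rw [vfun, if_neg (by omega)]

lemma vfun_nonneg (j : ℕ) (k : ℤ) : 0 ≤ vfun j k := by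
  induction j generalizing k with
  | zero => rw [vfun]; split <;> norm_num
  | succ j ih =>
    rw [vfun]; split
    · norm_num
    · have := ih (k-1); have := ih (k+1); linarith

lemma vfun_le_one (j : ℕ) (k : ℤ) : vfun j k ≤ 1 := by
  induction j generalizing k with
  | zero => rw [vfun]; split <;> norm_num
  | succ j ih =>
    rw [vfun]; split
    · norm_num
    · have := ih (k-1); have := ih (k+1); linarith

lemma vfun_convex (j : ℕ) : ∀ {k : ℤ}, 1 ≤ k → 2 * vfun j k ≤ vfun j (k-1) + vfun j (k+1) := by
  induction j with
  | zero =>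
    intro k hk
    rcases eq_or_lt_of_le hk with h | h
    · rw [← h]
      norm_num [vfun]
    · rw [vfun, vfun, vfun, if_neg (by omega), if_neg (by omega), if_neg (by omega)]
      norm_num
  | succ j ih =>
    intro k hk
    rcases eq_or_lt_of_le hk with h | h
    · subst h
      rw [vfun_pos_rec j le_rfl, vfun_nonpos (j+1) (by norm_num),
        show (1:ℤ)-1 = 0 by decide, vfun_nonpos j le_rfl,
        show (1:ℤ)+1 = 2 by decide,
        vfun_pos_rec j (by norm_num : (1:ℤ) ≤ 2),
        show (2:ℤ)-1 = 1 by decide, show (2:ℤ)+1 = 3 by decide]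
      have h1 := ih (k := 2) (by norm_num)
      simp only [show (2:ℤ)-1 = 1 by decide, show (2:ℤ)+1 = 3 by decide] at h1
      linarith
    · have hk2 : 2 ≤ k := by omega
      rw [vfun_pos_rec j (by omega), vfun_pos_rec j (by omega), vfun_pos_rec j (by omega)]
      have h1 := ih (k := k-1) (by omega)
      have h2 := ih (k := k+1) (by omega)
      simp only [show k-1-1 = k-2 from by ring, show k-1+1 = k from by ring,
        show k+1-1 = k from by ring, show k+1+1 = k+2 from by ring] at h1 h2 ⊢
      linarith

/-- piecewise-linear interpolation of `vfun` -/
noncomputable def psi (j : ℕ) (s : ℝ) : ℝ :=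
  ((⌊s⌋ : ℝ) + 1 - s) * vfun j ⌊s⌋ + (s - (⌊s⌋ : ℝ)) * vfun j (⌊s⌋ + 1)

lemma psi_int (j : ℕ) (k : ℤ) : psi j (k : ℝ) = vfun j k := by
  rw [psi, Int.floor_intCast]
  ring_nf

lemma psi_seg (j : ℕ) (k : ℤ) {s : ℝ} (h1 : (k:ℝ) ≤ s) (h2 : s ≤ (k:ℝ)+1) :
    psi j s = ((k:ℝ) + 1 - s) * vfun j k + (s - (k:ℝ)) * vfun j (k+1) := by
  rcases eq_or_lt_of_le h2 with he | hlt
  · have : s = ((k+1 : ℤ) : ℝ) := by push_cast; linarith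
    rw [this, psi_int]
    push_cast
    ring_nf
  · have hf : ⌊s⌋ = k := by
      rw [Int.floor_eq_iff]
      constructor
      · exact_mod_cast h1
      · exact_mod_cast hlt
    rw [psi, hf]

lemma psi_of_nonpos (j : ℕ) {s : ℝ} (hs : s ≤ 0) : psi j s = 1 := by
  rcases eq_or_lt_of_le hs with he | hlt
  · rw [he, show (0:ℝ) = ((0:ℤ):ℝ) by norm_num, psi_int, vfun_nonpos j le_rfl]
  · have hf : ⌊s⌋ + 1 ≤ 0 := by
      have : ⌊s⌋ < 0 := Int.floor_lt.mpr (by exact_mod_cast hlt)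
      omega
    rw [psi, vfun_nonpos j (by omega), vfun_nonpos j hf]
    ring

lemma psi_nonneg (j : ℕ) (s : ℝ) : 0 ≤ psi j s := by
  rw [psi]
  have h1 := Int.floor_le s
  have h2 := Int.lt_floor_add_one s
  have := vfun_nonneg j ⌊s⌋
  have := vfun_nonneg j (⌊s⌋+1)
  nlinarith

lemma psi_le_one (j : ℕ) (s : ℝ) : psi j s ≤ 1 := by
  rw [psi]
  have h1 := Int.floor_le s
  have h2 := Int.lt_floor_add_one s
  have := vfun_le_one j ⌊s⌋
  have := vfun_le_one j (⌊s⌋+1)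
  have := vfun_nonneg j ⌊s⌋
  have := vfun_nonneg j (⌊s⌋+1)
  nlinarith

lemma affine_le {α β a b u : ℝ} (ha : α + β*a ≤ 0) (hb : α + β*b ≤ 0)
    (h1 : a ≤ u) (h2 : u ≤ b) : α + β*u ≤ 0 := by
  rcases le_or_gt β 0 with h | h
  · nlinarith
  · nlinarith

lemma psi_le_line (j : ℕ) (k : ℤ) {A L a b : ℝ} (hka : (k:ℝ) ≤ a) (hbk : b ≤ (k:ℝ)+1)
    (ha : psi j a ≤ A + L*a) (hb : psi j b ≤ A + L*b) :
    ∀ u, a ≤ u → u ≤ b → psi j u ≤ A + L*u := by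
  intro u h1 h2
  have hab : a ≤ b := le_trans h1 h2
  rw [psi_seg j k hka (by linarith)] at ha
  rw [psi_seg j k (by linarith) hbk] at hb
  rw [psi_seg j k (by linarith) (by linarith)]
  have := affine_le (α := ((k:ℝ)+1) * vfun j k - (k:ℝ) * vfun j (k+1) - A)
    (β := vfun j (k+1) - vfun j k - L) (a := a) (b := b) (u := u)
    (by linarith [ha]) (by linarith [hb]) h1 h2
  linarith [this]

noncomputable def Lfun (j : ℕ) (s : ℝ) : ℝ :=
  if s ≤ 0 then 0 else if s < 1 then vfun (j+1) 1 - 1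
    else (psi j (s+1) - psi j (s-1))/2

lemma Lfun_abs_le (j : ℕ) (s : ℝ) : |Lfun j s| ≤ 1 := by
  rw [Lfun]
  split
  · norm_num
  · split
    · rw [abs_le]
      constructor
      · have := vfun_nonneg (j+1) 1; linarith
      · have := vfun_le_one (j+1) 1; linarith
    · rw [abs_le]
      constructor
      · have := psi_nonneg j (s+1); have := psi_le_one j (s-1); linarith
      · have := psi_le_one j (s+1); have := psi_nonneg j (s-1); linarith

lemma node1 {a b c d th : ℝ} (h0 : 0 ≤ th) (h1 : th ≤ 1) (hp : 2*b ≤ a+c) (hq : 2*c ≤ b+d) :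
    b ≤ ((1-th)*(a+c) + th*(b+d))/2 + (((1-th)*(c-a) + th*(d-b))/2) * (-th) := by
  have t1 : (0:ℝ) ≤ (1-th)*(a+c-2*b) := mul_nonneg (by linarith) (by linarith)
  have t2 : (0:ℝ) ≤ th*(1-th)*(a+c-2*b) := mul_nonneg (mul_nonneg h0 (by linarith)) (by linarith)
  have t3 : (0:ℝ) ≤ th*(1-th)*(b+d-2*c) := mul_nonneg (mul_nonneg h0 (by linarith)) (by linarith)
  nlinarith [t1, t2, t3]

lemma node2 {a b c d th : ℝ} (h0 : 0 ≤ th) (h1 : th ≤ 1) (hp : 2*b ≤ a+c) (hq : 2*c ≤ b+d) :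
    c ≤ ((1-th)*(a+c) + th*(b+d))/2 + (((1-th)*(c-a) + th*(d-b))/2) * (1-th) := by
  have t1 : (0:ℝ) ≤ th*(b+d-2*c) := mul_nonneg h0 (by linarith)
  have t2 : (0:ℝ) ≤ th*(1-th)*(a+c-2*b) := mul_nonneg (mul_nonneg h0 (by linarith)) (by linarith)
  have t3 : (0:ℝ) ≤ th*(1-th)*(b+d-2*c) := mul_nonneg (mul_nonneg h0 (by linarith)) (by linarith)
  nlinarith [t1, t2, t3]

lemma key_lemma (j : ℕ) (s u : ℝ) (h1 : s - 1 ≤ u) (h2 : u ≤ s + 1) :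
    psi j u ≤ psi (j+1) s + Lfun j s * (u - s) := by
  by_cases hs0 : s ≤ 0
  · rw [Lfun, if_pos hs0, psi_of_nonpos (j+1) hs0]
    have := psi_le_one j u
    linarith
  · push_neg at hs0
    by_cases hs1 : s < 1
    · rw [Lfun, if_neg (by linarith), if_pos hs1]
      have hv0 : vfun (j+1) (0:ℤ) = 1 := vfun_nonpos _ le_rfl
      have e_s : psi (j+1) s = 1 + (vfun (j+1) 1 - 1) * s := by
        rw [psi_seg (j+1) 0 (by push_cast; linarith) (by push_cast; linarith)]
        push_cast
        rw [hv0]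
        ring_nf
      have hv1 : vfun (j+1) 1 = (1 + vfun j 2)/2 := by
        rw [vfun_pos_rec j le_rfl, show (1:ℤ)-1 = 0 by decide, vfun_nonpos j le_rfl,
          show (1:ℤ)+1 = 2 by decide]
      have hgoal : psi (j+1) s + (vfun (j+1) 1 - 1) * (u - s)
          = 1 + (vfun (j+1) 1 - 1) * u := by
        rw [e_s]; ring
      rw [hgoal]
      -- now show psi j u ≤ 1 + (vfun (j+1) 1 - 1) * u for u ∈ (-1, 2)
      rcases le_or_gt u 0 with hu | hu
      · rw [psi_of_nonpos j hu]
        have := vfun_le_one (j+1) 1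
        nlinarith
      · have hA0 : psi j (((0:ℤ)):ℝ) ≤ 1 + (vfun (j+1) 1 - 1) * (((0:ℤ)):ℝ) := by
          rw [psi_int, vfun_nonpos j le_rfl]
          push_cast
          norm_num
        have hA1 : psi j (((1:ℤ)):ℝ) ≤ 1 + (vfun (j+1) 1 - 1) * (((1:ℤ)):ℝ) := by
          rw [psi_int]
          have hc := vfun_convex j (k := 1) le_rfl
          rw [show (1:ℤ)-1 = 0 by decide, vfun_nonpos j le_rfl, show (1:ℤ)+1 = 2 by decide] at hc
          push_cast
          rw [hv1]
          linarith
        have hA2 : psi j (((2:ℤ)):ℝ) ≤ 1 + (vfun (j+1) 1 - 1) * (((2:ℤ)):ℝ) := by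
          rw [psi_int]
          push_cast
          rw [hv1]
          ring_nf
          linarith [le_refl (vfun j 2)]
        rcases le_or_gt u 1 with hu1 | hu1
        · have := psi_le_line j 0 (A := 1) (L := vfun (j+1) 1 - 1) (a := ((0:ℤ):ℝ)) (b := ((1:ℤ):ℝ))
            (by norm_num) (by push_cast; norm_num) hA0 hA1 u (by push_cast; linarith) (by push_cast; linarith)
          linarith
        · have := psi_le_line j 1 (A := 1) (L := vfun (j+1) 1 - 1) (a := ((1:ℤ):ℝ)) (b := ((2:ℤ):ℝ))
            (by push_cast; norm_num) (by push_cast; norm_num) hA1 hA2 u (by push_cast; linarith) (by push_cast; linarith)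
          linarith
    · -- s ≥ 1
      push_neg at hs1
      set k := ⌊s⌋ with hkdef
      have hk1 : 1 ≤ k := by
        rw [hkdef]
        exact Int.le_floor.mpr (by exact_mod_cast hs1)
      have hks : (k:ℝ) ≤ s := Int.floor_le s
      have hsk : s < (k:ℝ)+1 := by
        have := Int.lt_floor_add_one s
        push_cast at this ⊢
        linarith
      set a := vfun j (k-1) with hadef
      set b := vfun j k with hbdef
      set c := vfun j (k+1) with hcdef
      set d := vfun j (k+2) with hddef
      have e_sm : psi j (s-1) = ((k:ℝ) - s + 1) * a + (s - (k:ℝ)) * b := by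
        rw [psi_seg j (k-1) (by push_cast; linarith) (by push_cast; linarith)]
        rw [show k-1+1 = k by ring]
        push_cast
        ring
      have e_sp : psi j (s+1) = ((k:ℝ) - s + 1) * c + (s - (k:ℝ)) * d := by
        rw [psi_seg j (k+1) (by push_cast; linarith) (by push_cast; linarith)]
        rw [show k+1+1 = k+2 by ring]
        push_cast
        ring
      have e_s : psi (j+1) s = ((k:ℝ) - s + 1) * ((a + c)/2) + (s - (k:ℝ)) * ((b + d)/2) := by
        rw [psi_seg (j+1) k hks (by linarith)]
        rw [vfun_pos_rec j hk1, vfun_pos_rec j (by omega)]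
        rw [show k+1-1 = k by ring, show k+1+1 = k+2 by ring]
        ring
      have hLf : Lfun j s = (psi j (s+1) - psi j (s-1))/2 := by
        rw [Lfun, if_neg (by linarith), if_neg (by linarith)]
      have hmid : psi (j+1) s = (psi j (s-1) + psi j (s+1))/2 := by
        rw [e_s, e_sm, e_sp]; ring
      -- line ℓ(u) = psi (j+1) s + Lfun j s * (u - s); define A, L
      set L := (psi j (s+1) - psi j (s-1))/2 with hLdef
      set A := psi (j+1) s - L * s with hAdef
      have hline : ∀ t : ℝ, psi (j+1) s + L * (t - s) = A + L * t := by
        intro t; rw [hAdef]; ring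
      rw [hLf, hline u]
      -- endpoint equalities
      have hEmq : A + L*(s-1) = psi j (s-1) := by
        rw [hAdef, hmid, hLdef]; ring
      have hEpq : A + L*(s+1) = psi j (s+1) := by
        rw [hAdef, hmid, hLdef]; ring
      -- discrete convexity
      have hp : 2*b ≤ a + c := vfun_convex j hk1
      have hq' := vfun_convex j (k := k+1) (by omega)
      simp only [show k+1-1 = k by ring, show k+1+1 = k+2 by ring] at hq'
      have hq : 2*c ≤ b + d := hq'
      -- node bounds
      have hNk : psi j ((k:ℝ)) ≤ A + L * ((k:ℝ)) := by
        rw [psi_int, ← hbdef]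
        have hrhs : A + L * ((k:ℝ)) = ((1-(s-(k:ℝ)))*(a+c) + (s-(k:ℝ))*(b+d))/2
            + (((1-(s-(k:ℝ)))*(c-a) + (s-(k:ℝ))*(d-b))/2) * (-(s-(k:ℝ))) := by
          rw [hAdef, hmid, hLdef, e_sm, e_sp]; ring
        rw [hrhs]
        exact node1 (by linarith) (by linarith) hp hq
      have hNk1 : psi j ((k:ℝ)+1) ≤ A + L * ((k:ℝ)+1) := by
        rw [show (k:ℝ)+1 = ((k+1:ℤ):ℝ) by push_cast; ring, psi_int, ← hcdef]
        have hrhs : A + L * (((k+1:ℤ):ℝ)) = ((1-(s-(k:ℝ)))*(a+c) + (s-(k:ℝ))*(b+d))/2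
            + (((1-(s-(k:ℝ)))*(c-a) + (s-(k:ℝ))*(d-b))/2) * (1-(s-(k:ℝ))) := by
          rw [hAdef, hmid, hLdef, e_sm, e_sp]; push_cast; ring
        rw [hrhs]
        exact node2 (by linarith) (by linarith) hp hq
      have hEm : psi j (s-1) ≤ A + L * (s-1) := le_of_eq hEmq.symm
      have hEp : psi j (s+1) ≤ A + L * (s+1) := le_of_eq hEpq.symm
      rcases le_or_gt u (k:ℝ) with hu | hu
      · exact psi_le_line j (k-1) (by push_cast; linarith) (by push_cast; linarith)
          hEm hNk u h1 hu
      · rcases le_or_gt u ((k:ℝ)+1) with hu1 | hu1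
        · exact psi_le_line j k le_rfl le_rfl hNk hNk1 u (le_of_lt hu) hu1
        · exact psi_le_line j (k+1) (by push_cast; exact le_rfl) (by push_cast; linarith)
            hNk1 hEp u (le_of_lt hu1) h2

lemma measurable_psi (j : ℕ) : Measurable (psi j) := by
  have hfl : Measurable fun s : ℝ => (⌊s⌋ : ℤ) := Int.measurable_floor
  have hflR : Measurable fun s : ℝ => ((⌊s⌋ : ℤ) : ℝ) :=
    (measurable_from_top (f := fun z : ℤ => (z : ℝ))).comp hfl
  have hv0 : Measurable fun s : ℝ => vfun j ⌊s⌋ :=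
    (measurable_from_top (f := fun z : ℤ => vfun j z)).comp hfl
  have hv1 : Measurable fun s : ℝ => vfun j (⌊s⌋ + 1) :=
    (measurable_from_top (f := fun z : ℤ => vfun j (z+1))).comp hfl
  unfold psi
  exact (((hflR.add measurable_const).sub measurable_id).mul hv0).add
    ((measurable_id.sub hflR).mul hv1)

lemma measurable_Lfun (j : ℕ) : Measurable (Lfun j) := by
  unfold Lfun
  refine Measurable.ite (measurableSet_le measurable_id measurable_const) measurable_const ?_
  refine Measurable.ite (measurableSet_lt measurable_id measurable_const) measurable_const ?_
  exact (((measurable_psi j).comp (measurable_id.add measurable_const)).sub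
    ((measurable_psi j).comp (measurable_id.sub measurable_const))).div_const 2

open MeasureTheory

lemma zero_integral_incr {Ω : Type*} {m0 : MeasurableSpace Ω} {μ : Measure Ω} [IsProbabilityMeasure μ]
    {ℱ : Filtration ℕ m0} {X : ℕ → Ω → ℝ} (hmart : Martingale X ℱ μ) (k : ℕ)
    {g : Ω → ℝ} (hg : StronglyMeasurable[ℱ k] g) {C : ℝ} (hgb : ∀ ω, |g ω| ≤ C) :
    ∫ ω, g ω * (X (k+1) ω - X k ω) ∂μ = 0 := by
  have hXk : Integrable (X k) μ := hmart.integrable k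
  have hXk1 : Integrable (X (k+1)) μ := hmart.integrable (k+1)
  have hgm0 : AEStronglyMeasurable g μ := (hg.mono (ℱ.le k)).aestronglyMeasurable
  have hb : ∃ C', ∀ ω, ‖g ω‖ ≤ C' := ⟨C, fun ω => by simpa [Real.norm_eq_abs] using hgb ω⟩
  have hint1 : Integrable (fun ω => g ω * X (k+1) ω) μ := hXk1.bdd_mul hgm0 (ae_of_all _ fun ω => by simpa [Real.norm_eq_abs] using hgb ω)
  have hint0 : Integrable (fun ω => g ω * X k ω) μ := hXk.bdd_mul hgm0 (ae_of_all _ fun ω => by simpa [Real.norm_eq_abs] using hgb ω)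
  have hmul : μ[fun ω => g ω * X (k+1) ω|ℱ k] =ᵐ[μ] fun ω => g ω * (μ[X (k+1)|ℱ k]) ω :=
    condExp_mul_of_stronglyMeasurable_left hg hint1 hXk1
  have h2 : μ[X (k+1)|ℱ k] =ᵐ[μ] X k := hmart.condExp_ae_eq (Nat.le_succ k)
  have e1 : ∫ ω, g ω * X (k+1) ω ∂μ = ∫ ω, g ω * X k ω ∂μ := by
    rw [← integral_condExp (ℱ.le k) (f := fun ω => g ω * X (k+1) ω)]
    apply integral_congr_ae
    filter_upwards [hmul, h2] with ω hω h2ω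
    rw [hω]
    simp only [h2ω]
  have : ∫ ω, g ω * (X (k+1) ω - X k ω) ∂μ
      = (∫ ω, g ω * X (k+1) ω ∂μ) - ∫ ω, g ω * X k ω ∂μ := by
    rw [← integral_sub hint1 hint0]
    congr 1
    funext ω
    ring
  rw [this, e1, sub_self]

lemma one_sided {Ω : Type*} {m0 : MeasurableSpace Ω} {μ : Measure Ω} [IsProbabilityMeasure μ]
    {ℱ : Filtration ℕ m0} {X : ℕ → Ω → ℝ} {c : ℝ} (hc : 0 < c)
    (hmart : Martingale X ℱ μ)
    (hbdd : ∀ m : ℕ, ∀ᵐ ω ∂μ, |X (m + 1) ω - X m ω| ≤ c)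
    (x m : ℕ) :
    (μ {ω | X m ω - X 0 ω ≥ (x : ℝ) * c}).toReal ≤ vfun m (x : ℤ) := by
  have hc' : c ≠ 0 := ne_of_gt hc
  set W : ℕ → Ω → ℝ := fun k ω => (x:ℝ) - (X k ω - X 0 ω)/c with hW
  have hXSM : ∀ k, StronglyMeasurable[ℱ k] (X k) := fun k => hmart.stronglyAdapted k
  have hWSM : ∀ k, StronglyMeasurable[ℱ k] (W k) := by
    intro k
    apply StronglyMeasurable.sub stronglyMeasurable_const
    simp only [div_eq_mul_inv]
    exact ((hXSM k).sub ((hXSM 0).mono (ℱ.mono (Nat.zero_le k)))).mul_const c⁻¹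
  have hWmeas : ∀ k, Measurable (W k) := fun k => ((hWSM k).mono (ℱ.le k)).measurable
  have hWint : ∀ k, Integrable (W k) μ := by
    intro k
    apply Integrable.sub (integrable_const _)
    exact ((hmart.integrable k).sub (hmart.integrable 0)).div_const c
  have hpsiint : ∀ j k, Integrable (fun ω => psi j (W k ω)) μ := by
    intro j k
    apply Integrable.mono' (integrable_const 1)
      ((measurable_psi j).comp (hWmeas k)).aestronglyMeasurable
    filter_upwards with ω
    have hh1 := psi_nonneg j (W k ω)
    have hh2 := psi_le_one j (W k ω)
    simp only [Function.comp_apply, Real.norm_eq_abs, abs_le]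
    constructor <;> linarith
  have step : ∀ k, k < m →
      (∫ ω, psi (m-(k+1)) (W (k+1) ω) ∂μ) ≤ ∫ ω, psi (m-k) (W k ω) ∂μ := by
    intro k hk
    set j := m - (k+1) with hj
    have hmk : m - k = j + 1 := by omega
    rw [hmk]
    set g : Ω → ℝ := fun ω => Lfun j (W k ω) with hg
    have hgSM : StronglyMeasurable[ℱ k] g :=
      ((measurable_Lfun j).comp (hWSM k).measurable).stronglyMeasurable
    have hgb : ∀ ω, |g ω| ≤ 1 := fun ω => Lfun_abs_le j (W k ω)
    have hdint : Integrable (fun ω => g ω * (W (k+1) ω - W k ω)) μ :=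
      ((hWint (k+1)).sub (hWint k)).bdd_mul
        ((hgSM.mono (ℱ.le k)).aestronglyMeasurable)
        (ae_of_all _ fun ω => by simpa [Real.norm_eq_abs] using hgb ω)
    have hzero : ∫ ω, g ω * (W (k+1) ω - W k ω) ∂μ = 0 := by
      have e : ∀ ω, g ω * (W (k+1) ω - W k ω)
          = (g ω * (-c⁻¹)) * (X (k+1) ω - X k ω) := by
        intro ω
        rw [hW]
        field_simp
        ring
      rw [show (fun ω => g ω * (W (k+1) ω - W k ω))
          = fun ω => (g ω * (-c⁻¹)) * (X (k+1) ω - X k ω) from funext e]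
      exact zero_integral_incr hmart k (hgSM.mul_const _)
        (C := c⁻¹) (fun ω => by
          rw [abs_mul]
          calc |g ω| * |(-c⁻¹)| ≤ 1 * |(-c⁻¹)| := by
                apply mul_le_mul_of_nonneg_right (hgb ω) (abs_nonneg _)
            _ = c⁻¹ := by
                rw [one_mul, abs_neg, abs_of_pos (by positivity)])
    have hptwise : ∀ᵐ ω ∂μ, psi j (W (k+1) ω)
        ≤ psi (j+1) (W k ω) + g ω * (W (k+1) ω - W k ω) := by
      filter_upwards [hbdd k] with ω hb
      have hdiff : W (k+1) ω - W k ω = -((X (k+1) ω - X k ω)/c) := by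
        rw [hW]; field_simp; ring
      have habs : |W (k+1) ω - W k ω| ≤ 1 := by
        rw [hdiff, abs_neg, abs_div, abs_of_pos hc, div_le_one hc]
        exact hb
      rw [abs_le] at habs
      exact key_lemma j (W k ω) (W (k+1) ω) (by linarith [habs.1]) (by linarith [habs.2])
    calc (∫ ω, psi j (W (k+1) ω) ∂μ)
        ≤ ∫ ω, (psi (j+1) (W k ω) + g ω * (W (k+1) ω - W k ω)) ∂μ :=
          integral_mono_ae (hpsiint j (k+1)) ((hpsiint (j+1) k).add hdint) hptwise
      _ = (∫ ω, psi (j+1) (W k ω) ∂μ) + ∫ ω, g ω * (W (k+1) ω - W k ω) ∂μ :=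
          integral_add (hpsiint (j+1) k) hdint
      _ = ∫ ω, psi (j+1) (W k ω) ∂μ := by rw [hzero, add_zero]
  have chain : ∀ k, k ≤ m →
      (∫ ω, psi (m-k) (W k ω) ∂μ) ≤ ∫ ω, psi m (W 0 ω) ∂μ := by
    intro k
    induction k with
    | zero => intro _; simp
    | succ k ih =>
      intro hk
      exact le_trans (step k (by omega)) (ih (by omega))
  have hW0 : ∀ ω, W 0 ω = ((x:ℤ):ℝ) := by
    intro ω
    rw [hW]
    push_cast
    field_simp
    ring
  have hF0 : (∫ ω, psi m (W 0 ω) ∂μ) = vfun m (x:ℤ) := by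
    have : (fun ω => psi m (W 0 ω)) = fun _ => vfun m (x:ℤ) := by
      funext ω
      rw [hW0 ω, psi_int]
    rw [this, integral_const]
    simp
  have hAmeas : MeasurableSet {ω | X m ω - X 0 ω ≥ (x : ℝ) * c} := by
    have h1 : Measurable (X m) := ((hXSM m).mono (ℱ.le m)).measurable
    have h0 : Measurable (X 0) := ((hXSM 0).mono (ℱ.le 0)).measurable
    exact measurableSet_le measurable_const (h1.sub h0)
  have hind : (μ {ω | X m ω - X 0 ω ≥ (x : ℝ) * c}).toReal
      ≤ ∫ ω, psi 0 (W m ω) ∂μ := by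
    rw [← measureReal_def, ← integral_indicator_one hAmeas]
    apply integral_mono ((integrable_const (1:ℝ)).indicator hAmeas) (hpsiint 0 m)
    intro ω
    by_cases hω : ω ∈ {ω | X m ω - X 0 ω ≥ (x : ℝ) * c}
    · rw [Set.indicator_of_mem hω]
      show (1:ℝ) ≤ psi 0 (W m ω)
      have hωs : (x:ℝ) * c ≤ X m ω - X 0 ω := hω
      have hWm : W m ω ≤ 0 := by
        have h' : (x:ℝ) ≤ (X m ω - X 0 ω)/c := (le_div_iff₀ hc).mpr hωs
        show (x:ℝ) - (X m ω - X 0 ω)/c ≤ 0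
        linarith
      rw [psi_of_nonpos 0 hWm]
    · rw [Set.indicator_of_notMem hω]
      exact psi_nonneg 0 (W m ω)
  have hmm : m - m = 0 := by omega
  calc (μ {ω | X m ω - X 0 ω ≥ (x : ℝ) * c}).toReal
      ≤ ∫ ω, psi 0 (W m ω) ∂μ := hind
    _ = ∫ ω, psi (m-m) (W m ω) ∂μ := by rw [hmm]
    _ ≤ ∫ ω, psi m (W 0 ω) ∂μ := chain m le_rfl
    _ = vfun m (x:ℤ) := hF0

theorem simple_bound_for_bounded_martingale
    {Ω : Type*} {m0 : MeasurableSpace Ω} {μ : Measure Ω} [IsProbabilityMeasure μ]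
    {ℱ : Filtration ℕ m0} {X : ℕ → Ω → ℝ} {c : ℝ} (hc : 0 < c)
    (hmart : Martingale X ℱ μ)
    (hbdd : ∀ m : ℕ, ∀ᵐ ω ∂μ, |X (m + 1) ω - X m ω| ≤ c)
    (x y m : ℕ) :
    (μ {ω | X m ω - X 0 ω ≥ (x : ℝ) * c ∨ X m ω - X 0 ω ≤ -((y : ℝ) * c)}).toReal
      ≤ 2 * Ib (((m : ℤ) - x) / 2) (2 * (((m : ℤ) - x) / 2) + x + 2).toNat
        + 2 * Ib (((m : ℤ) - y) / 2) (2 * (((m : ℤ) - y) / 2) + y + 2).toNat := by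
  have hA := one_sided hc hmart hbdd x m
  have hbddn : ∀ n : ℕ, ∀ᵐ ω ∂μ, |(-X) (n+1) ω - (-X) n ω| ≤ c := by
    intro n
    filter_upwards [hbdd n] with ω h
    rw [show (-X) (n+1) ω - (-X) n ω = -(X (n+1) ω - X n ω) by simp [Pi.neg_apply]; ring,
      abs_neg]
    exact h
  have hB := one_sided hc hmart.neg hbddn y m
  have hset : {ω | (-X) m ω - (-X) 0 ω ≥ (y:ℝ)*c} = {ω | X m ω - X 0 ω ≤ -((y:ℝ)*c)} := by
    ext ω
    simp only [Set.mem_setOf_eq, Pi.neg_apply]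
    constructor <;> intro h <;> linarith
  rw [hset] at hB
  have hU : {ω | X m ω - X 0 ω ≥ (x : ℝ) * c ∨ X m ω - X 0 ω ≤ -((y : ℝ) * c)}
      = {ω | X m ω - X 0 ω ≥ (x:ℝ)*c} ∪ {ω | X m ω - X 0 ω ≤ -((y:ℝ)*c)} := rfl
  have hle := measure_union_le (μ := μ) {ω | X m ω - X 0 ω ≥ (x:ℝ)*c}
    {ω | X m ω - X 0 ω ≤ -((y:ℝ)*c)}
  have h1 : (μ ({ω | X m ω - X 0 ω ≥ (x:ℝ)*c} ∪ {ω | X m ω - X 0 ω ≤ -((y:ℝ)*c)})).toReal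
      ≤ (μ {ω | X m ω - X 0 ω ≥ (x:ℝ)*c}).toReal
        + (μ {ω | X m ω - X 0 ω ≤ -((y:ℝ)*c)}).toReal := by
    rw [← ENNReal.toReal_add (measure_ne_top μ _) (measure_ne_top μ _)]
    exact ENNReal.toReal_mono
      (ENNReal.add_ne_top.mpr ⟨measure_ne_top μ _, measure_ne_top μ _⟩) hle
  rw [hU, ← vfun_eq_Ib m x, ← vfun_eq_Ib m y]
  linarith
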